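/- Network stability: let n ≥ 1, let X_1, …, X_n be nonempty closed subsets of ℝ, let 𝒳 = {x ∈ ℝ^n : x_i ∈ X_i for all i}, and let F : ℝ^n → ℝ^n map 𝒳 into itself. Suppose Λ is an n×n real matrix with nonnegative entries such that |F_i(x) − F_i(y)| ≤ Σ_{j=1}^n Λ_{ij} |x_j − y_j| for all x, y ∈ 𝒳 and all i, and suppose the spectral radius satisfies ρ(Λ) < 1. Then F is globally stable on 𝒳: there exists x* ∈ 𝒳 with F(x*) = x* such that for every x⁰ ∈ 𝒳 the iterates F^k(x⁰) converge to x* as k → ∞. -/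

import Mathlib

open Matrix

/-- The spectral radius of a square real matrix: the maximum of `|λ|` over the complex
roots `λ` of its characteristic polynomial (and `0` if there are none). -/
noncomputable def specRad {n : Type*} [Fintype n] [DecidableEq n]
    (A : Matrix n n ℝ) : ℝ :=
  (((Matrix.charpoly (A.map Complex.ofReal)).roots).map (fun z : ℂ => ‖z‖)).fold max 0

attribute [local instance] Matrix.linftyOpNormedRing Matrix.linftyOpNormedAlgebra

lemma le_fold_max {s : Multiset ℝ} {a : ℝ} (h : a ∈ s) : a ≤ s.fold max 0 := by
  induction s using Multiset.induction_on with
  | empty => simp at h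
  | cons b t ih =>
    rw [Multiset.fold_cons_left]
    rcases Multiset.mem_cons.mp h with rfl | h
    · exact le_max_left _ _
    · exact le_trans (ih h) (le_max_right _ _)

lemma zero_le_fold_max (s : Multiset ℝ) : 0 ≤ s.fold max 0 := by
  induction s using Multiset.induction_on with
  | empty => simp
  | cons b t ih =>
    rw [Multiset.fold_cons_left]
    exact le_trans ih (le_max_right _ _)

lemma charpoly_isRoot_of_mem_spectrum {m : Type*} [Fintype m] [DecidableEq m]
    (B : Matrix m m ℂ) {μ : ℂ} (hμ : μ ∈ spectrum ℂ B) : B.charpoly.IsRoot μ := by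
  rw [spectrum.mem_iff, Matrix.isUnit_iff_isUnit_det, isUnit_iff_ne_zero, not_ne_iff] at hμ
  have hdet : Polynomial.eval μ B.charpoly = (algebraMap ℂ (Matrix m m ℂ) μ - B).det := by
    rw [Matrix.charpoly, ← Polynomial.coe_evalRingHom, RingHom.map_det]
    congr 1
    ext i j
    by_cases h : i = j <;>
      simp [Matrix.charmatrix_apply, Matrix.map_apply, h, Matrix.algebraMap_matrix_apply,
        Matrix.diagonal_apply]
  exact hdet.trans hμ

lemma nnnorm_map_ofReal {m : Type*} [Fintype m] [DecidableEq m] (M : Matrix m m ℝ) :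
    ‖M.map Complex.ofReal‖₊ = ‖M‖₊ := by
  simp [Matrix.linfty_opNNNorm_def, Matrix.map_apply]

/-- network stability.  If `F` maps the product state space
`𝒳 = Π X_i` into itself, `Λ` is a nonnegative matrix with
`|F_i(x) − F_i(y)| ≤ Σ_j Λ_{ij} |x_j − y_j|` on `𝒳`, and `ρ(Λ) < 1`, then `F` is globally
stable on `𝒳`: it has a fixed point `x* ∈ 𝒳` to which all orbits starting in `𝒳`
converge. -/
theorem network_stability
    {n : ℕ} (hn : 1 ≤ n) (X : Fin n → Set ℝ)
    (hXne : ∀ i, (X i).Nonempty) (hXcl : ∀ i, IsClosed (X i))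
    (F : (Fin n → ℝ) → (Fin n → ℝ))
    (hF : ∀ x : Fin n → ℝ, (∀ i, x i ∈ X i) → ∀ i, F x i ∈ X i)
    (Λ : Matrix (Fin n) (Fin n) ℝ) (hΛ : ∀ i j, 0 ≤ Λ i j)
    (hLip : ∀ x y : Fin n → ℝ, (∀ i, x i ∈ X i) → (∀ i, y i ∈ X i) →
      ∀ i, |F x i - F y i| ≤ ∑ j, Λ i j * |x j - y j|)
    (hρ : specRad Λ < 1) :
    ∃ xstar : Fin n → ℝ, (∀ i, xstar i ∈ X i) ∧ F xstar = xstar ∧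
      ∀ x0 : Fin n → ℝ, (∀ i, x0 i ∈ X i) →
        Filter.Tendsto (fun k => F^[k] x0) Filter.atTop (nhds xstar) := by
  classical
  set A : Matrix (Fin n) (Fin n) ℂ := Λ.map Complex.ofReal with hA
  have hρ0 : 0 ≤ specRad Λ := zero_le_fold_max _
  obtain ⟨r, hr1, hr2⟩ : ∃ r : ℝ, specRad Λ < r ∧ r < 1 := exists_between hρ
  have hr0 : 0 < r := lt_of_le_of_lt hρ0 hr1
  have hcomplete : CompleteSpace (Matrix (Fin n) (Fin n) ℂ) := FiniteDimensional.complete ℂ _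
  -- spectral radius bound
  have hsr : spectralRadius ℂ A ≤ ENNReal.ofReal (specRad Λ) := by
    unfold spectralRadius
    refine iSup₂_le fun μ hμ => ?_
    have hroot : A.charpoly.IsRoot μ := charpoly_isRoot_of_mem_spectrum A hμ
    have hne : A.charpoly ≠ 0 := (Matrix.charpoly_monic A).ne_zero
    have hmem : μ ∈ A.charpoly.roots := (Polynomial.mem_roots hne).mpr hroot
    have habs : ‖μ‖ ≤ specRad Λ := by
      unfold specRad
      exact le_fold_max (Multiset.mem_map_of_mem _ hmem)
    rw [← enorm_eq_nnnorm, ← ofReal_norm]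
    exact ENNReal.ofReal_le_ofReal habs
  have hlt : spectralRadius ℂ A < ENNReal.ofReal r :=
    lt_of_le_of_lt hsr ((ENNReal.ofReal_lt_ofReal_iff hr0).mpr hr1)
  have hgel := spectrum.pow_nnnorm_pow_one_div_tendsto_nhds_spectralRadius A
  have hev : ∀ᶠ k : ℕ in Filter.atTop,
      (‖A ^ k‖₊ : ENNReal) ^ (1 / (k : ℝ)) < ENNReal.ofReal r :=
    hgel.eventually_lt_const hlt
  -- relating powers of A and Λ
  have hpowmap : ∀ k : ℕ, A ^ k = (Λ ^ k).map Complex.ofReal := by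
    intro k
    have h1 : A = Complex.ofRealHom.mapMatrix Λ := by
      ext i j; simp [hA, Matrix.map_apply]
    have h2 : (Λ ^ k).map Complex.ofReal = Complex.ofRealHom.mapMatrix (Λ ^ k) := by
      ext i j; simp [Matrix.map_apply]
    rw [h1, h2, ← map_pow]
  have hnormpow : ∀ k : ℕ, ‖A ^ k‖ = ‖Λ ^ k‖ := by
    intro k
    rw [hpowmap k, ← coe_nnnorm, ← coe_nnnorm, nnnorm_map_ofReal]
  -- eventual geometric bound
  have hev2 : ∀ᶠ k : ℕ in Filter.atTop, ‖Λ ^ k‖ ≤ r ^ k := by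
    filter_upwards [hev, Filter.eventually_ge_atTop 1] with k hk hk1
    have hkpos : (0 : ℝ) < k := by exact_mod_cast hk1
    have h2 := ENNReal.rpow_lt_rpow hk hkpos
    rw [← ENNReal.rpow_mul, one_div_mul_cancel (ne_of_gt hkpos), ENNReal.rpow_one,
      ENNReal.rpow_natCast, ← ENNReal.ofReal_pow hr0.le] at h2
    rw [← enorm_eq_nnnorm, ← ofReal_norm,
      ENNReal.ofReal_lt_ofReal_iff (pow_pos hr0 k)] at h2
    rw [← hnormpow k]
    exact le_of_lt h2
  obtain ⟨N, hN⟩ := Filter.eventually_atTop.mp hev2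
  have hpow0 : Filter.Tendsto (fun k : ℕ => ‖Λ ^ k‖) Filter.atTop (nhds 0) := by
    refine squeeze_zero' (Filter.Eventually.of_forall fun k => norm_nonneg _) hev2 ?_
    exact tendsto_pow_atTop_nhds_zero_of_lt_one hr0.le hr2
  have hsum : Summable (fun k : ℕ => ‖Λ ^ k‖) := by
    rw [← summable_nat_add_iff N]
    refine Summable.of_nonneg_of_le (fun k => norm_nonneg _) (fun k => ?_)
      ((summable_geometric_of_lt_one hr0.le hr2).mul_left (r ^ N))
    calc ‖Λ ^ (k + N)‖ ≤ r ^ (k + N) := hN _ (Nat.le_add_left N k)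
    _ = r ^ N * r ^ k := by rw [pow_add, mul_comm]
  -- dynamics
  have hiter_mem : ∀ (x : Fin n → ℝ), (∀ i, x i ∈ X i) → ∀ k i, F^[k] x i ∈ X i := by
    intro x hx k
    induction k with
    | zero => simpa using hx
    | succ k ih =>
      rw [Function.iterate_succ_apply']
      exact hF _ ih
  have hkey : ∀ (x y : Fin n → ℝ), (∀ i, x i ∈ X i) → (∀ i, y i ∈ X i) → ∀ k i,
      |F^[k] x i - F^[k] y i| ≤ ((Λ ^ k) *ᵥ (fun j => |x j - y j|)) i := by
    intro x y hx hy k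
    induction k with
    | zero =>
      intro i
      rw [pow_zero, Matrix.one_mulVec]
      simp
    | succ k ih =>
      intro i
      rw [Function.iterate_succ_apply', Function.iterate_succ_apply']
      calc |F (F^[k] x) i - F (F^[k] y) i|
          ≤ ∑ j, Λ i j * |F^[k] x j - F^[k] y j| :=
            hLip _ _ (hiter_mem x hx k) (hiter_mem y hy k) i
        _ ≤ ∑ j, Λ i j * ((Λ ^ k) *ᵥ (fun j => |x j - y j|)) j :=
            Finset.sum_le_sum fun j _ =>
              mul_le_mul_of_nonneg_left (ih j) (hΛ i j)
        _ = ((Λ ^ (k + 1)) *ᵥ (fun j => |x j - y j|)) i := by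
            rw [pow_succ', ← Matrix.mulVec_mulVec]
            rfl
  have hdist : ∀ (x y : Fin n → ℝ), (∀ i, x i ∈ X i) → (∀ i, y i ∈ X i) → ∀ k,
      dist (F^[k] x) (F^[k] y) ≤ ‖Λ ^ k‖ * dist x y := by
    intro x y hx hy k
    rw [dist_eq_norm]
    have hnn : (0:ℝ) ≤ ‖Λ ^ k‖ * dist x y := mul_nonneg (norm_nonneg _) dist_nonneg
    refine (pi_norm_le_iff_of_nonneg hnn).mpr fun i => ?_
    have h4 : ‖(fun j => |x j - y j| : Fin n → ℝ)‖ = dist x y := by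
      rw [dist_eq_norm, Pi.norm_def, Pi.norm_def]
      congr 1
      refine Finset.sup_congr rfl fun j _ => ?_
      rw [Pi.sub_apply, Real.nnnorm_abs]
    calc ‖(F^[k] x - F^[k] y) i‖ = |F^[k] x i - F^[k] y i| := by
          rw [Pi.sub_apply, Real.norm_eq_abs]
      _ ≤ ((Λ ^ k) *ᵥ (fun j => |x j - y j|)) i := hkey x y hx hy k i
      _ ≤ ‖(Λ ^ k) *ᵥ (fun j => |x j - y j|)‖ :=
          (le_abs_self _).trans (le_of_eq_of_le (Real.norm_eq_abs _).symm
            (norm_le_pi_norm _ i))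
      _ ≤ ‖Λ ^ k‖ * ‖(fun j => |x j - y j| : Fin n → ℝ)‖ :=
          Matrix.linfty_opNorm_mulVec _ _
      _ = ‖Λ ^ k‖ * dist x y := by rw [h4]
  -- base point and limit
  set p : Fin n → ℝ := fun i => (hXne i).some with hp
  have hpmem : ∀ i, p i ∈ X i := fun i => (hXne i).some_mem
  have hFpmem : ∀ i, F p i ∈ X i := hF p hpmem
  have hcauchy : CauchySeq (fun k => F^[k] p) := by
    refine cauchySeq_of_dist_le_of_summable (fun k => ‖Λ ^ k‖ * dist p (F p))
      (fun k => ?_) (hsum.mul_right _)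
    have := hdist p (F p) hpmem hFpmem k
    rwa [← Function.iterate_succ_apply F k p] at this
  obtain ⟨L, hL⟩ := cauchySeq_tendsto_of_complete hcauchy
  have hLmem : ∀ i, L i ∈ X i := by
    intro i
    have hti : Filter.Tendsto (fun k => F^[k] p i) Filter.atTop (nhds (L i)) :=
      tendsto_pi_nhds.mp hL i
    exact (hXcl i).mem_of_tendsto hti
      (Filter.Eventually.of_forall fun k => hiter_mem p hpmem k i)
  have hshift : Filter.Tendsto (fun k => F^[k+1] p) Filter.atTop (nhds L) :=
    hL.comp (Filter.tendsto_add_atTop_nat 1)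
  have hdistL : Filter.Tendsto (fun k => dist (F^[k] p) L) Filter.atTop (nhds 0) :=
    tendsto_iff_dist_tendsto_zero.mp hL
  have htoFL : Filter.Tendsto (fun k => F^[k+1] p) Filter.atTop (nhds (F L)) := by
    rw [tendsto_iff_dist_tendsto_zero]
    have hg1 := hdistL.const_mul ‖Λ ^ 1‖
    rw [mul_zero] at hg1
    refine squeeze_zero (fun k => dist_nonneg) (fun k => ?_) hg1
    have h5 := hdist (F^[k] p) L (hiter_mem p hpmem k) hLmem 1
    rw [Function.iterate_one F] at h5
    rw [Function.iterate_succ_apply']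
    exact h5
  have hfix : F L = L := tendsto_nhds_unique htoFL hshift
  refine ⟨L, hLmem, hfix, ?_⟩
  intro x0 hx0
  rw [tendsto_iff_dist_tendsto_zero]
  have hLfix : ∀ k, F^[k] L = L := fun k => Function.iterate_fixed hfix k
  have hg : Filter.Tendsto (fun k : ℕ => ‖Λ ^ k‖ * dist x0 L) Filter.atTop (nhds 0) := by
    have := hpow0.mul_const (dist x0 L)
    rwa [zero_mul] at this
  refine squeeze_zero (fun k => dist_nonneg) (fun k => ?_) hg
  have := hdist x0 L hx0 hLmem k
  rwa [hLfix k] at this
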